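/- Let K ≥ 1 and N ≥ 1 be integers and let μ ∈ (0,1) be the normalized cache size. Let l* be the (unique) integer satisfying μK − 1 ≤ l* < μK. Define the placement vector a* ∈ ℝ^{K+1} by a*_{l*} = (l* + 1 − μK)/C(K,l*), a*_{l*+1} = (μK − l*)/C(K,l*+1), and a*_l = 0 for all other indices l. Then a* is a feasible cache placement vector, and for every feasible cache placement vector a one has R̄(a*) ≤ R̄(a); that is, a* minimizes the expected delivery rate of the MCCS. -/

import Mathlib

open Finset

/-- Number of distinct requests `Ñ(d)` of a demand vector `d`. -/
def distinctReq {K N : ℕ} (d : Fin K → Fin N) : ℕ :=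
  (Finset.univ.image d).card

/-- Expected delivery rate `R̄(a)` of the MCCS under placement vector `a`. -/
noncomputable def expectedRate (K N : ℕ) (a : Fin (K + 1) → ℝ) : ℝ :=
  ((N : ℝ) ^ K)⁻¹ *
    ∑ d : Fin K → Fin N, ∑ l : Fin K,
      ((K.choose ((l : ℕ) + 1) : ℝ) - ((K - distinctReq d).choose ((l : ℕ) + 1) : ℝ)) *
        a l.castSucc

/-- Feasibility of a cache placement vector `a` for normalized cache size `μ`:
file-partition constraint, cache-size constraint, and `0 ≤ a_l ≤ 1`. -/
def Feasible (K : ℕ) (μ : ℝ) (a : Fin (K + 1) → ℝ) : Prop :=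
  (∑ l : Fin (K + 1), (K.choose (l : ℕ) : ℝ) * a l) = 1 ∧
  (∑ l : Fin K, ((K - 1).choose (l : ℕ) : ℝ) * a l.succ) ≤ μ ∧
  ∀ l, 0 ≤ a l ∧ a l ≤ 1

/-- telescoping identity -/
lemma tele (K j : ℕ) (a b : ℕ) (hab : a ≤ b) (hb : b ≤ K) :
    (K - a).choose (j+1) = (K - b).choose (j+1) + ∑ i ∈ Finset.Ico a b, (K - 1 - i).choose j := by
  induction b with
  | zero => interval_cases a; simp
  | succ b ih =>
    rcases Nat.eq_or_lt_of_le hab with h | h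
    · subst h; simp
    · have hab' : a ≤ b := Nat.lt_succ_iff.mp h
      rw [Finset.sum_Ico_succ_top hab', ih hab' (by omega)]
      have hK : K - b = (K - (b+1)) + 1 := by omega
      rw [hK, Nat.choose_succ_succ']
      have : K - 1 - b = K - (b+1) := by omega
      rw [this]; ring

lemma choose_helper (K l j : ℕ) (hl : l ≤ K) (hj : j + 1 ≤ K) :
    K.choose l * (K - l).choose (j+1) = K.choose (j+1) * (K - (j+1)).choose l := by
  rcases le_or_gt (l + (j+1)) K with h | h
  · have h1 := Nat.choose_mul (n := K) (k := l+(j+1)) (s := l) (Nat.le_add_right _ _)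
    have h2 := Nat.choose_mul (n := K) (k := (j+1)+l) (s := j+1) (Nat.le_add_right _ _)
    simp only [Nat.add_sub_cancel_left] at h1 h2
    rw [← h1, ← h2, Nat.add_comm l (j+1), Nat.choose_symm_add]
  · have h1 : (K - l).choose (j+1) = 0 := Nat.choose_eq_zero_of_lt (by omega)
    have h2 : (K - (j+1)).choose l = 0 := Nat.choose_eq_zero_of_lt (by omega)
    simp [h1, h2]

/-- supporting line at `t` for the convex function `l ↦ C(K-l, j+1)` -/
lemma psi_support (K j t l : ℕ) (ht : t + 1 ≤ K) (hl : l ≤ K) :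
    ((K - t).choose (j+1) : ℝ) ≤ ((K - l).choose (j+1) : ℝ)
      + ((K - 1 - t).choose j : ℝ) * ((l : ℝ) - (t : ℝ)) := by
  rcases le_or_gt t l with h | h
  · have e := tele K j t l h hl
    have hb : ∑ i ∈ Finset.Ico t l, (K - 1 - i).choose j ≤ (l - t) * (K - 1 - t).choose j := by
      calc ∑ i ∈ Finset.Ico t l, (K - 1 - i).choose j
          ≤ ∑ _i ∈ Finset.Ico t l, (K - 1 - t).choose j := by
            apply Finset.sum_le_sum
            intro i hi
            exact Nat.choose_le_choose j (by simp at hi; omega)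
        _ = (l - t) * (K - 1 - t).choose j := by
            rw [Finset.sum_const, Nat.card_Ico, smul_eq_mul]
    have key : (K - t).choose (j+1) ≤ (K - l).choose (j+1) + (l - t) * (K - 1 - t).choose j := by
      omega
    have hcast : ((l : ℝ) - (t : ℝ)) = ((l - t : ℕ) : ℝ) := by
      rw [Nat.cast_sub h]
    rw [hcast]
    calc ((K - t).choose (j+1) : ℝ)
        ≤ (((K - l).choose (j+1) + (l - t) * (K - 1 - t).choose j : ℕ) : ℝ) := by
          exact_mod_cast key
      _ = ((K - l).choose (j+1) : ℝ) + ((K - 1 - t).choose j : ℝ) * ((l - t : ℕ) : ℝ) := by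
          push_cast; ring
  · have e := tele K j l t h.le (by omega)
    have hb : (t - l) * (K - 1 - t).choose j ≤ ∑ i ∈ Finset.Ico l t, (K - 1 - i).choose j := by
      calc (t - l) * (K - 1 - t).choose j
          = ∑ _i ∈ Finset.Ico l t, (K - 1 - t).choose j := by
            rw [Finset.sum_const, Nat.card_Ico, smul_eq_mul]
        _ ≤ ∑ i ∈ Finset.Ico l t, (K - 1 - i).choose j := by
            apply Finset.sum_le_sum
            intro i hi
            exact Nat.choose_le_choose j (by simp at hi; omega)
    have key : (K - t).choose (j+1) + (t - l) * (K - 1 - t).choose j ≤ (K - l).choose (j+1) := by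
      omega
    have hcast : ((l : ℝ) - (t : ℝ)) = -(((t - l : ℕ) : ℝ)) := by
      rw [Nat.cast_sub h.le]; ring
    rw [hcast]
    have : (((K - t).choose (j+1) + (t - l) * (K - 1 - t).choose j : ℕ) : ℝ)
        ≤ ((K - l).choose (j+1) : ℝ) := by exact_mod_cast key
    push_cast at this
    linarith

noncomputable def hfun (K n l : ℕ) : ℝ :=
  ∑ j ∈ Finset.range n, ((K - l).choose (j+1) : ℝ) / (K.choose (j+1) : ℝ)

lemma hfun_diff (K n t : ℕ) (hn : n ≤ K) (ht : t + 1 ≤ K) :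
    hfun K n (t+1) - hfun K n t
      = -∑ j ∈ Finset.range n, ((K - 1 - t).choose j : ℝ) / (K.choose (j+1) : ℝ) := by
  unfold hfun
  rw [← Finset.sum_sub_distrib, ← Finset.sum_neg_distrib]
  apply Finset.sum_congr rfl
  intro j hj
  have e := tele K j t (t+1) (by omega) ht
  rw [Finset.sum_Ico_succ_top (le_refl t), Finset.Ico_self, Finset.sum_empty] at e
  have : ((K - (t+1)).choose (j+1) : ℝ) = ((K - t).choose (j+1) : ℝ) - ((K - 1 - t).choose j : ℝ) := by
    rw [e]; push_cast; ring
  rw [this]; ring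

lemma hfun_support (K n t l : ℕ) (hn : n ≤ K) (ht : t + 1 ≤ K) (hl : l ≤ K) :
    hfun K n t + (hfun K n (t+1) - hfun K n t) * ((l : ℝ) - (t : ℝ)) ≤ hfun K n l := by
  rw [hfun_diff K n t hn ht]
  unfold hfun
  rw [neg_mul, Finset.sum_mul, ← sub_eq_add_neg, ← Finset.sum_sub_distrib]
  apply Finset.sum_le_sum
  intro j hj
  have hjK : j + 1 ≤ K := by simp at hj; omega
  have hC : (0:ℝ) < (K.choose (j+1) : ℝ) := by
    exact_mod_cast Nat.choose_pos hjK
  have hps := psi_support K j t l ht hl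
  have heq : ((K - t).choose (j+1) : ℝ) / (K.choose (j+1) : ℝ)
      - ((K - 1 - t).choose j : ℝ) / (K.choose (j+1) : ℝ) * ((l:ℝ) - (t:ℝ))
      = (((K - t).choose (j+1) : ℝ) - ((K - 1 - t).choose j : ℝ) * ((l:ℝ) - (t:ℝ)))
        / (K.choose (j+1) : ℝ) := by ring
  rw [heq, div_le_div_iff_of_pos_right hC]
  nlinarith [hps, hC]

lemma hfun_mono (K n t : ℕ) (ht : t + 1 ≤ K) : hfun K n (t+1) ≤ hfun K n t := by
  unfold hfun
  apply Finset.sum_le_sum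
  intro j hj
  gcongr
  · omega

lemma w_eq (K n l : ℕ) (hn : n ≤ K) (hl : l ≤ K) :
    (K.choose (l+1) : ℝ) - ((K - n).choose (l+1) : ℝ) = (K.choose l : ℝ) * hfun K n l := by
  unfold hfun
  rw [Finset.mul_sum]
  have step : ∀ j ∈ Finset.range n,
      (K.choose l : ℝ) * (((K - l).choose (j+1) : ℝ) / (K.choose (j+1) : ℝ))
        = ((K - 1 - j).choose l : ℝ) := by
    intro j hj
    have hjK : j + 1 ≤ K := by simp at hj; omega
    have hC : (K.choose (j+1) : ℝ) ≠ 0 := by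
      exact_mod_cast (Nat.choose_pos hjK).ne'
    have hid := choose_helper K l j hl hjK
    have h2 : K - (j+1) = K - 1 - j := by omega
    rw [h2] at hid
    have hidR : (K.choose l : ℝ) * ((K - l).choose (j+1) : ℝ)
        = (K.choose (j+1) : ℝ) * ((K - 1 - j).choose l : ℝ) := by exact_mod_cast hid
    field_simp
    linarith [hidR]
  rw [Finset.sum_congr rfl step]
  have e := tele K l 0 n (Nat.zero_le n) hn
  rw [Nat.sub_zero, ← Finset.range_eq_Ico] at e
  have eR : (K.choose (l+1) : ℝ)
      = ((K - n).choose (l+1) : ℝ) + ∑ j ∈ Finset.range n, ((K - 1 - j).choose l : ℝ) := by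
    exact_mod_cast e
  linarith

noncomputable def Hbig (K N l : ℕ) : ℝ :=
  ((N : ℝ) ^ K)⁻¹ * ∑ d : Fin K → Fin N, hfun K (distinctReq d) l

lemma distinctReq_le {K N : ℕ} (d : Fin K → Fin N) : distinctReq d ≤ K := by
  unfold distinctReq
  calc (Finset.univ.image d).card ≤ (Finset.univ : Finset (Fin K)).card :=
        Finset.card_image_le
    _ = K := by simp

lemma rate_eq (K N : ℕ) (a : Fin (K + 1) → ℝ) :
    expectedRate K N a
      = ∑ l : Fin (K + 1), (K.choose (l : ℕ) : ℝ) * Hbig K N (l : ℕ) * a l := by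
  unfold expectedRate
  have per_d : ∀ d : Fin K → Fin N,
      ∑ l : Fin K,
        ((K.choose ((l : ℕ) + 1) : ℝ) - ((K - distinctReq d).choose ((l : ℕ) + 1) : ℝ))
          * a l.castSucc
      = ∑ l : Fin (K + 1), (K.choose (l : ℕ) : ℝ) * hfun K (distinctReq d) (l : ℕ) * a l := by
    intro d
    rw [Fin.sum_univ_castSucc]
    have hlast : (K.choose ((Fin.last K : Fin (K+1)) : ℕ) : ℝ)
        * hfun K (distinctReq d) ((Fin.last K : Fin (K+1)) : ℕ) * a (Fin.last K)
        = 0 * a (Fin.last K) := by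
      congr 1
      rw [Fin.val_last, ← w_eq K (distinctReq d) K (distinctReq_le d) le_rfl]
      rw [Nat.choose_eq_zero_of_lt (by omega), Nat.choose_eq_zero_of_lt (by omega)]
      simp
    rw [hlast, zero_mul, add_zero]
    apply Finset.sum_congr rfl
    intro l _
    rw [Fin.coe_castSucc, ← w_eq K (distinctReq d) (l : ℕ) (distinctReq_le d) (by omega)]
  rw [Finset.sum_congr rfl (fun d _ => per_d d), Finset.sum_comm, Finset.mul_sum]
  apply Finset.sum_congr rfl
  intro l _
  simp only [Hbig, Finset.mul_sum, Finset.sum_mul]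
  apply Finset.sum_congr rfl
  intro d _
  ring

lemma Hbig_mono (K N t : ℕ) (ht : t + 1 ≤ K) : Hbig K N (t+1) ≤ Hbig K N t := by
  unfold Hbig
  apply mul_le_mul_of_nonneg_left _ (by positivity)
  exact Finset.sum_le_sum fun d _ => hfun_mono K _ t ht

lemma Hbig_support (K N t l : ℕ) (ht : t + 1 ≤ K) (hl : l ≤ K) :
    Hbig K N t + (Hbig K N (t+1) - Hbig K N t) * ((l : ℝ) - (t : ℝ)) ≤ Hbig K N l := by
  unfold Hbig
  have key : ∑ d : Fin K → Fin N,
      (hfun K (distinctReq d) t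
        + (hfun K (distinctReq d) (t+1) - hfun K (distinctReq d) t) * ((l : ℝ) - (t : ℝ)))
      ≤ ∑ d : Fin K → Fin N, hfun K (distinctReq d) l := by
    apply Finset.sum_le_sum
    intro d _
    exact hfun_support K (distinctReq d) t l (distinctReq_le d) ht hl
  have expand : ∑ d : Fin K → Fin N,
      (hfun K (distinctReq d) t
        + (hfun K (distinctReq d) (t+1) - hfun K (distinctReq d) t) * ((l : ℝ) - (t : ℝ)))
      = (∑ d : Fin K → Fin N, hfun K (distinctReq d) t)
        + ((∑ d : Fin K → Fin N, hfun K (distinctReq d) (t+1))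
          - ∑ d : Fin K → Fin N, hfun K (distinctReq d) t) * ((l : ℝ) - (t : ℝ)) := by
    rw [Finset.sum_add_distrib, ← Finset.sum_mul, Finset.sum_sub_distrib]
  rw [expand] at key
  have hinv : (0:ℝ) ≤ ((N : ℝ) ^ K)⁻¹ := by positivity
  nlinarith [key, hinv]

lemma sum_two (K t : ℕ) (ht : t + 1 ≤ K) (A B : ℝ) (f : Fin (K+1) → ℝ)
    (a : Fin (K+1) → ℝ)
    (ha : ∀ l, a l = if (l : ℕ) = t then A else if (l : ℕ) = t + 1 then B else 0) :
    ∑ l : Fin (K+1), f l * a l = f ⟨t, by omega⟩ * A + f ⟨t+1, by omega⟩ * B := by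
  set I1 : Fin (K+1) := ⟨t, by omega⟩
  set I2 : Fin (K+1) := ⟨t+1, by omega⟩
  have hne : I1 ≠ I2 := by simp [I1, I2, Fin.ext_iff]
  have hsub : ({I1, I2} : Finset (Fin (K+1))) ⊆ Finset.univ := Finset.subset_univ _
  rw [← Finset.sum_subset hsub]
  · rw [Finset.sum_pair hne]
    have ha1 : a I1 = A := by rw [ha]; simp [I1]
    have ha2 : a I2 = B := by
      rw [ha]; simp [I2]
    rw [ha1, ha2]
  · intro x _ hx
    simp only [Finset.mem_insert, Finset.mem_singleton] at hx
    push_neg at hx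
    have hx1 : (x : ℕ) ≠ t := by
      intro h; exact hx.1 (Fin.ext h)
    have hx2 : (x : ℕ) ≠ t + 1 := by
      intro h; exact hx.2 (Fin.ext h)
    rw [ha, if_neg hx1, if_neg hx2, mul_zero]

lemma cache_id (K : ℕ) (hK : 1 ≤ K) (a : Fin (K+1) → ℝ) :
    ∑ l : Fin (K+1), ((l : ℕ) : ℝ) * (K.choose (l : ℕ) : ℝ) * a l
      = (K : ℝ) * ∑ l : Fin K, ((K-1).choose (l : ℕ) : ℝ) * a l.succ := by
  rw [Fin.sum_univ_succ, Finset.mul_sum]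
  simp only [Fin.val_zero, Nat.cast_zero, zero_mul, zero_add]
  apply Finset.sum_congr rfl
  intro l _
  have hnat : K * (K-1).choose (l : ℕ) = K.choose ((l : ℕ)+1) * ((l : ℕ)+1) := by
    have := Nat.add_one_mul_choose_eq (K-1) (l : ℕ)
    have hK1 : K - 1 + 1 = K := by omega
    rw [hK1] at this
    exact this
  have hR : ((K : ℝ)) * ((K-1).choose (l : ℕ) : ℝ) = (K.choose ((l:ℕ)+1) : ℝ) * (((l:ℕ):ℝ)+1) := by
    exact_mod_cast hnat
  have hv : ((l.succ : Fin (K+1)) : ℕ) = (l : ℕ) + 1 := by simp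
  rw [hv]
  push_cast
  linear_combination (-(a l.succ)) * hR

/-- **Theorem 1 (optimality of the two-subgroup placement).**
For `K, N ≥ 1` and `μ ∈ (0,1)`, with `l*` the integer satisfying `μK − 1 ≤ l* < μK`,
the placement `a*` with `a*_{l*} = (l*+1−μK)/C(K,l*)`, `a*_{l*+1} = (μK−l*)/C(K,l*+1)`
and all other entries zero is feasible and minimizes the expected delivery rate. -/
theorem optimal_cache_placement_MCCS
    (K N : ℕ) (hK : 1 ≤ K) (hN : 1 ≤ N)
    (μ : ℝ) (hμ0 : 0 < μ) (hμ1 : μ < 1)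
    (lstar : ℕ) (hl1 : μ * K - 1 ≤ (lstar : ℝ)) (hl2 : (lstar : ℝ) < μ * K)
    (astar : Fin (K + 1) → ℝ)
    (hastar : ∀ l : Fin (K + 1),
      astar l =
        if (l : ℕ) = lstar then ((lstar : ℝ) + 1 - μ * K) / (K.choose lstar : ℝ)
        else if (l : ℕ) = lstar + 1 then (μ * K - (lstar : ℝ)) / (K.choose (lstar + 1) : ℝ)
        else 0) :
    Feasible K μ astar ∧
      ∀ a : Fin (K + 1) → ℝ, Feasible K μ a →
        expectedRate K N astar ≤ expectedRate K N a := by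
  have hKR : (0:ℝ) < (K:ℝ) := by exact_mod_cast hK
  have hμK : μ * K < K := by nlinarith
  have htKR : (lstar : ℝ) < (K : ℝ) := lt_trans hl2 hμK
  have htK : lstar + 1 ≤ K := by exact_mod_cast Nat.succ_le_of_lt (by exact_mod_cast htKR)
  have hCt : (0:ℝ) < (K.choose lstar : ℝ) := by
    exact_mod_cast Nat.choose_pos (by omega)
  have hCt1 : (0:ℝ) < (K.choose (lstar+1) : ℝ) := by
    exact_mod_cast Nat.choose_pos htK
  have hCt_ge1 : (1:ℝ) ≤ (K.choose lstar : ℝ) := by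
    exact_mod_cast Nat.choose_pos (show lstar ≤ K by omega)
  have hCt1_ge1 : (1:ℝ) ≤ (K.choose (lstar+1) : ℝ) := by
    exact_mod_cast Nat.choose_pos htK
  set A : ℝ := ((lstar : ℝ) + 1 - μ * K) / (K.choose lstar : ℝ) with hA
  set B : ℝ := (μ * K - (lstar : ℝ)) / (K.choose (lstar + 1) : ℝ) with hB
  -- the three sum evaluations for astar
  have hpart : ∑ l : Fin (K+1), (K.choose (l : ℕ) : ℝ) * astar l = 1 := by
    have h1 := sum_two K lstar htK A B (fun l => (K.choose (l : ℕ) : ℝ)) astar hastar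
    simp only [] at h1
    rw [h1, hA, hB]
    field_simp
    ring
  have hcachesum : ∑ l : Fin K, ((K-1).choose (l : ℕ) : ℝ) * astar l.succ = μ := by
    have h2 := sum_two K lstar htK A B
      (fun l => ((l : ℕ) : ℝ) * (K.choose (l : ℕ) : ℝ)) astar hastar
    simp only [] at h2
    rw [cache_id K hK astar] at h2
    have hval : (K:ℝ) * (∑ l : Fin K, ((K-1).choose (l : ℕ) : ℝ) * astar l.succ)
        = μ * K := by
      rw [h2, hA, hB]
      push_cast
      field_simp
      ring
    have := mul_left_cancel₀ (ne_of_gt hKR) (by rw [hval]; ring : (K:ℝ) *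
      (∑ l : Fin K, ((K-1).choose (l : ℕ) : ℝ) * astar l.succ) = (K:ℝ) * μ)
    linarith [this]
  have hfeas : Feasible K μ astar := by
    refine ⟨hpart, le_of_eq hcachesum, ?_⟩
    intro l
    rw [hastar l]
    split_ifs with h1 h2
    · constructor
      · apply div_nonneg _ hCt.le; linarith
      · rw [div_le_one hCt]; linarith
    · constructor
      · apply div_nonneg _ hCt1.le; linarith
      · rw [div_le_one hCt1]; linarith
    · exact ⟨le_rfl, zero_le_one⟩
  refine ⟨hfeas, ?_⟩
  intro a ⟨hp, hc, hb⟩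
  rw [rate_eq, rate_eq]
  set Ht := Hbig K N lstar with hHt
  set Ht1 := Hbig K N (lstar + 1) with hHt1
  -- value for astar
  have hstar : ∑ l : Fin (K+1), (K.choose (l : ℕ) : ℝ) * Hbig K N (l : ℕ) * astar l
      = Ht * ((lstar : ℝ) + 1 - μ * K) + Ht1 * (μ * K - (lstar : ℝ)) := by
    have h3 := sum_two K lstar htK A B
      (fun l => (K.choose (l : ℕ) : ℝ) * Hbig K N (l : ℕ)) astar hastar
    simp only [] at h3
    rw [h3, hA, hB, hHt, hHt1]
    field_simp
  rw [hstar]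
  -- lower bound for a
  have hΔ : Ht1 - Ht ≤ 0 := by
    have := Hbig_mono K N lstar htK
    rw [← hHt, ← hHt1] at this
    linarith
  have hSle : ∑ l : Fin (K+1), ((l : ℕ) : ℝ) * (K.choose (l : ℕ) : ℝ) * a l ≤ μ * K := by
    rw [cache_id K hK a]
    calc (K:ℝ) * ∑ l : Fin K, ((K-1).choose (l : ℕ) : ℝ) * a l.succ
        ≤ (K:ℝ) * μ := by
          apply mul_le_mul_of_nonneg_left hc hKR.le
      _ = μ * K := by ring
  set S := ∑ l : Fin (K+1), ((l : ℕ) : ℝ) * (K.choose (l : ℕ) : ℝ) * a l with hS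
  have hlower : Ht * (∑ l : Fin (K+1), (K.choose (l : ℕ) : ℝ) * a l)
      + (Ht1 - Ht) * S
      - (Ht1 - Ht) * (lstar : ℝ) * (∑ l : Fin (K+1), (K.choose (l : ℕ) : ℝ) * a l)
      ≤ ∑ l : Fin (K+1), (K.choose (l : ℕ) : ℝ) * Hbig K N (l : ℕ) * a l := by
    have perl : ∀ l : Fin (K+1),
        Ht * ((K.choose (l : ℕ) : ℝ) * a l)
          + (Ht1 - Ht) * (((l : ℕ) : ℝ) * (K.choose (l : ℕ) : ℝ) * a l)
          - (Ht1 - Ht) * (lstar : ℝ) * ((K.choose (l : ℕ) : ℝ) * a l)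
        ≤ (K.choose (l : ℕ) : ℝ) * Hbig K N (l : ℕ) * a l := by
      intro l
      have hsup := Hbig_support K N lstar (l : ℕ) htK (by omega)
      rw [← hHt, ← hHt1] at hsup
      have hCa : (0:ℝ) ≤ (K.choose (l : ℕ) : ℝ) * a l :=
        mul_nonneg (by positivity) (hb l).1
      have := mul_le_mul_of_nonneg_right hsup hCa
      calc Ht * ((K.choose (l : ℕ) : ℝ) * a l)
            + (Ht1 - Ht) * (((l : ℕ) : ℝ) * (K.choose (l : ℕ) : ℝ) * a l)
            - (Ht1 - Ht) * (lstar : ℝ) * ((K.choose (l : ℕ) : ℝ) * a l)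
          = (Ht + (Ht1 - Ht) * (((l : ℕ) : ℝ) - (lstar : ℝ)))
              * ((K.choose (l : ℕ) : ℝ) * a l) := by ring
        _ ≤ Hbig K N (l : ℕ) * ((K.choose (l : ℕ) : ℝ) * a l) := this
        _ = (K.choose (l : ℕ) : ℝ) * Hbig K N (l : ℕ) * a l := by ring
    calc Ht * (∑ l : Fin (K+1), (K.choose (l : ℕ) : ℝ) * a l)
          + (Ht1 - Ht) * S
          - (Ht1 - Ht) * (lstar : ℝ) * (∑ l : Fin (K+1), (K.choose (l : ℕ) : ℝ) * a l)
        = ∑ l : Fin (K+1),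
            (Ht * ((K.choose (l : ℕ) : ℝ) * a l)
              + (Ht1 - Ht) * (((l : ℕ) : ℝ) * (K.choose (l : ℕ) : ℝ) * a l)
              - (Ht1 - Ht) * (lstar : ℝ) * ((K.choose (l : ℕ) : ℝ) * a l)) := by
          rw [hS, Finset.sum_sub_distrib, Finset.sum_add_distrib, ← Finset.mul_sum,
            ← Finset.mul_sum, ← Finset.mul_sum]
      _ ≤ _ := Finset.sum_le_sum fun l _ => perl l
  rw [hp] at hlower
  nlinarith [hlower, hΔ, hSle]
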